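/- Let G be a magmal comonad on a magmal category C, and suppose the left cloaks [Y,Z] and [GY,GZ] exist in C (right adjoints to -⊗Y and -⊗GY evaluated at Z and GZ respectively). Then for any G-coalgebra (Y,υ) and any object Z, the cofree coalgebra (G[Y,Z], δ_{[Y,Z]}) together with the evaluation map ev := ev^{GY}_{GZ} ∘ (G₂ˡ ⊗ υ) : G[Y,Z] ⊗ Y → GZ is a left cloak of the cofree coalgebra (GZ, δ_Z) by (Y,υ) in C^G; that is, composition with ev induces a bijection C^G((A,α), (G[Y,Z], δ_{[Y,Z]})) ≅ C^G((A,α) ⊗ (Y,υ), (GZ, δ_Z)) for all coalgebras (A,α). -/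

import Mathlib

open CategoryTheory

namespace WoodStmt4

variable {C : Type*} [Category C]

/-- A magmal comonad: a comonad `G` on a magmal category `(C, T)` together with a natural
family `G₂ : G X ⊗ G Y ⟶ G (X ⊗ Y)` for which `ε` and `δ` are magmal. -/
structure MagmalComonad (T : C ⥤ C ⥤ C) (G : Comonad C) where
  g2 : ∀ X Y : C, (T.obj (G.obj X)).obj (G.obj Y) ⟶ G.obj ((T.obj X).obj Y)
  natl : ∀ {X X' : C} (Y : C) (f : X ⟶ X'),
    (T.map (G.map f)).app (G.obj Y) ≫ g2 X' Y = g2 X Y ≫ G.map ((T.map f).app Y)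
  natr : ∀ (X : C) {Y Y' : C} (g : Y ⟶ Y'),
    (T.obj (G.obj X)).map (G.map g) ≫ g2 X Y' = g2 X Y ≫ G.map ((T.obj X).map g)
  counit_comp : ∀ X Y : C, g2 X Y ≫ G.ε.app ((T.obj X).obj Y) =
    (T.map (G.ε.app X)).app (G.obj Y) ≫ (T.obj X).map (G.ε.app Y)
  delta_comp : ∀ X Y : C, g2 X Y ≫ G.δ.app ((T.obj X).obj Y) =
    (T.map (G.δ.app X)).app (G.obj Y) ≫ (T.obj (G.obj (G.obj X))).map (G.δ.app Y)
      ≫ g2 (G.obj X) (G.obj Y) ≫ G.map (g2 X Y)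

/-- The coaction `G₂ ∘ (ξ ⊗ υ)` on the tensor product of the underlying objects of two
`G`-coalgebras. -/
def coact {T : C ⥤ C ⥤ C} {G : Comonad C} (M : MagmalComonad T G)
    (A B : G.Coalgebra) :
    (T.obj A.A).obj B.A ⟶ G.obj ((T.obj A.A).obj B.A) :=
  (T.map A.a).app B.A ≫ (T.obj (G.obj A.A)).map B.a ≫ M.g2 A.A B.A

/-- `(E, ev)` is a left cloak of `Z` by `Y` for a tensor `T` on any category:
composition with `ev : E ⊗ Y ⟶ Z` induces bijections `(X ⟶ E) ≅ (X ⊗ Y ⟶ Z)`. -/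
def IsCloak {D : Type*} [Category D] (T : D ⥤ D ⥤ D) (Y Z E : D)
    (ev : (T.obj E).obj Y ⟶ Z) : Prop :=
  ∀ (X : D) (f : (T.obj X).obj Y ⟶ Z), ∃! g : X ⟶ E, (T.map g).app Y ≫ ev = f

/-- A coalgebra morphism into a cofree coalgebra is determined by its composite with the
counit. -/
lemma hom_to_cofree_eq {G : Comonad C} {W : G.Coalgebra} {Z : C}
    (u : W ⟶ G.cofree.obj Z) :
    u.f = W.a ≫ G.map (u.f ≫ G.ε.app Z) := by
  have h : W.a ≫ G.map u.f = u.f ≫ G.δ.app Z := u.h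
  erw [Functor.map_comp, ← Category.assoc, h, Category.assoc, Comonad.right_counit]
  exact (Category.comp_id _).symm

/-- Construct a coalgebra morphism into a cofree coalgebra from a plain morphism. -/
def toCofree {G : Comonad C} (W : G.Coalgebra) {Z : C} (q : W.A ⟶ Z) :
    W ⟶ G.cofree.obj Z where
  f := W.a ≫ G.map q
  h := by
    change W.a ≫ G.map (W.a ≫ G.map q) = (W.a ≫ G.map q) ≫ G.δ.app Z
    rw [Functor.map_comp, ← Category.assoc, ← W.coassoc, Category.assoc, Category.assoc]
    congr 1
    exact (G.δ.naturality q).symm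

@[simp] lemma toCofree_f {G : Comonad C} (W : G.Coalgebra) {Z : C} (q : W.A ⟶ Z) :
    (toCofree W q).f = W.a ≫ G.map q := rfl
/-- Let `G` be a magmal comonad on a magmal category `(C, T)` and
suppose the left cloaks `([Y,Z], ev₁)` and `([GY,GZ], ev₂)` exist in `C`.  Let `G₂ˡ` be
the mate of `G₂` (characterized by `(G₂ˡ ⊗ 1) ≫ ev₂ = G₂ ≫ G ev₁`).  Then for any
`G`-coalgebra `(Y, υ)`, the cofree coalgebra `(G[Y,Z], δ)` with evaluation
`ev₂ ∘ (G₂ˡ ⊗ υ)` is a left cloak of the cofree coalgebra `(GZ, δ_Z)` by `(Y, υ)` in the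
magmal category `C^G`. -/
theorem cofree_cloak (T : C ⥤ C ⥤ C) (G : Comonad C) (M : MagmalComonad T G)
    (Tbar : G.Coalgebra ⥤ G.Coalgebra ⥤ G.Coalgebra)
    (hobj : ∀ A B : G.Coalgebra, ((Tbar.obj A).obj B).A = (T.obj A.A).obj B.A)
    (hcoact : ∀ A B : G.Coalgebra, ((Tbar.obj A).obj B).a =
      eqToHom (hobj A B) ≫ coact M A B ≫ G.map (eqToHom (hobj A B).symm))
    (hmap : ∀ {A A' B B' : G.Coalgebra} (f : A ⟶ A') (g : B ⟶ B'),
      ((Tbar.map f).app B ≫ (Tbar.obj A').map g).f =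
        eqToHom (hobj A B) ≫ (T.map f.f).app B.A ≫ (T.obj A'.A).map g.f ≫
          eqToHom (hobj A' B').symm)
    (A : G.Coalgebra) (Z : C)
    (E1 : C) (ev1 : (T.obj E1).obj A.A ⟶ Z) (h1 : IsCloak T A.A Z E1 ev1)
    (E2G : C) (ev2G : (T.obj E2G).obj (G.obj A.A) ⟶ G.obj Z)
    (h2G : IsCloak T (G.obj A.A) (G.obj Z) E2G ev2G)
    (g2l : G.obj E1 ⟶ E2G)
    (hg2l : (T.map g2l).app (G.obj A.A) ≫ ev2G = M.g2 E1 A.A ≫ G.map ev1) :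
    ∃ ev : (Tbar.obj (G.cofree.obj E1)).obj A ⟶ G.cofree.obj Z,
      ev.f = eqToHom (hobj (G.cofree.obj E1) A) ≫
        (T.map g2l).app A.A ≫ (T.obj E2G).map A.a ≫ ev2G ∧
      IsCloak Tbar A (G.cofree.obj Z) (G.cofree.obj E1) ev := by
  classical
  -- the underlying evaluation map in `C`
  set e : (T.obj (G.obj E1)).obj A.A ⟶ G.obj Z :=
    (T.map g2l).app A.A ≫ (T.obj E2G).map A.a ≫ ev2G with he_def
  -- (a) composite of `e` with the counit
  have ha : e ≫ G.ε.app Z = (T.map (G.ε.app E1)).app A.A ≫ ev1 := by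
    have n1 := (T.map g2l).naturality A.a
    have n2 := (T.map (G.ε.app E1)).naturality A.a
    simp only [Functor.id_obj] at n1 n2
    calc e ≫ G.ε.app Z
        = (T.obj (G.obj E1)).map A.a ≫ (T.map g2l).app (G.obj A.A) ≫ ev2G ≫ G.ε.app Z := by
          rw [he_def, ← Category.assoc ((T.map g2l).app A.A), ← n1]
          simp only [Category.assoc]
      _ = (T.obj (G.obj E1)).map A.a ≫ M.g2 E1 A.A ≫ G.map ev1 ≫ G.ε.app Z := by
          rw [reassoc_of% hg2l]
      _ = (T.obj (G.obj E1)).map A.a ≫ M.g2 E1 A.A ≫ G.ε.app ((T.obj E1).obj A.A) ≫ ev1 := by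
          have := G.ε.naturality ev1
          simp only [Functor.id_map] at this
          rw [this]
      _ = (T.obj (G.obj E1)).map A.a ≫ (T.map (G.ε.app E1)).app (G.obj A.A) ≫
            (T.obj E1).map (G.ε.app A.A) ≫ ev1 := by
          rw [reassoc_of% (M.counit_comp E1 A.A)]
      _ = (T.map (G.ε.app E1)).app A.A ≫ (T.obj E1).map A.a ≫
            (T.obj E1).map (G.ε.app A.A) ≫ ev1 := by
          rw [← Category.assoc, n2, Category.assoc]
      _ = (T.map (G.ε.app E1)).app A.A ≫ ev1 := by
          rw [← Category.assoc ((T.obj E1).map A.a), ← Functor.map_comp, A.counit]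
          simp
  -- (b) the coaction followed by `G (e ≫ ε)` gives back `e`
  have hb : coact M (G.cofree.obj E1) A ≫ G.map (e ≫ G.ε.app Z) = e := by
    unfold coact
    simp only [Category.assoc]
    refine (?_ : (T.map (G.δ.app E1)).app A.A ≫ (T.obj (G.obj (G.obj E1))).map A.a ≫
      M.g2 (G.obj E1) A.A ≫ G.map (e ≫ G.ε.app Z) = e)
    rw [ha]
    have n1 := (T.map (G.map (G.ε.app E1))).naturality A.a
    have n2 := (T.map g2l).naturality A.a
    simp only [Functor.id_obj] at n1 n2
    calc (T.map (G.δ.app E1)).app A.A ≫ (T.obj (G.obj (G.obj E1))).map A.a ≫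
      M.g2 (G.obj E1) A.A ≫ G.map ((T.map (G.ε.app E1)).app A.A ≫ ev1)
        = (T.map (G.δ.app E1)).app A.A ≫ (T.obj (G.obj (G.obj E1))).map A.a ≫
            M.g2 (G.obj E1) A.A ≫ G.map ((T.map (G.ε.app E1)).app A.A) ≫ G.map ev1 := by
          simp only [Functor.map_comp, Category.assoc]
      _ = (T.map (G.δ.app E1)).app A.A ≫ (T.obj (G.obj (G.obj E1))).map A.a ≫
            (T.map (G.map (G.ε.app E1))).app (G.obj A.A) ≫ M.g2 E1 A.A ≫ G.map ev1 := by
          rw [← reassoc_of% (M.natl A.A (G.ε.app E1))]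
      _ = (T.map (G.δ.app E1)).app A.A ≫ (T.map (G.map (G.ε.app E1))).app A.A ≫
            (T.obj (G.obj E1)).map A.a ≫ M.g2 E1 A.A ≫ G.map ev1 := by
          rw [← Category.assoc ((T.obj (G.obj (G.obj E1))).map A.a), n1]
          simp only [Category.assoc]
      _ = (T.obj (G.obj E1)).map A.a ≫ M.g2 E1 A.A ≫ G.map ev1 := by
          rw [← Category.assoc, ← NatTrans.comp_app, ← T.map_comp, Comonad.right_counit,
            T.map_id, NatTrans.id_app, Category.id_comp]
      _ = (T.obj (G.obj E1)).map A.a ≫ (T.map g2l).app (G.obj A.A) ≫ ev2G := by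
          rw [hg2l]
      _ = e := by
          rw [he_def, ← Category.assoc, n2, Category.assoc]
  -- the evaluation morphism in `C^G`
  set q : (((Tbar.obj (G.cofree.obj E1)).obj A).A ⟶ Z) :=
    eqToHom (hobj (G.cofree.obj E1) A) ≫ e ≫ G.ε.app Z with hq_def
  set ev : (Tbar.obj (G.cofree.obj E1)).obj A ⟶ G.cofree.obj Z :=
    toCofree ((Tbar.obj (G.cofree.obj E1)).obj A) q with hev_def
  have hevf : ev.f = eqToHom (hobj (G.cofree.obj E1) A) ≫ e := by
    rw [hev_def, toCofree_f, hq_def, hcoact]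
    simp only [Category.assoc, ← Functor.map_comp, eqToHom_trans_assoc, eqToHom_refl,
      Category.id_comp]
    rw [hb]
  refine ⟨ev, hevf, ?_⟩
  -- key computation: composite with the counit, for any coalgebra map into `G[Y,Z]`
  have hkey : ∀ (X : G.Coalgebra) (g : X ⟶ G.cofree.obj E1),
      ((Tbar.map g).app A ≫ ev).f ≫ G.ε.app Z =
        eqToHom (hobj X A) ≫ (T.map (g.f ≫ G.ε.app E1)).app A.A ≫ ev1 := by
    intro X g
    have hmg := hmap g (𝟙 A)
    simp only [CategoryTheory.Functor.map_id, Category.comp_id, Comonad.Coalgebra.id_f,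
      Functor.map_id, Category.id_comp] at hmg
    have hcf : ((Tbar.map g).app A ≫ ev).f = ((Tbar.map g).app A).f ≫ ev.f := rfl
    rw [hcf, hmg, hevf]
    have key : (T.map g.f).app A.A ≫ e ≫ G.ε.app Z =
        (T.map (g.f ≫ G.ε.app E1)).app A.A ≫ ev1 := by
      erw [ha, T.map_comp, NatTrans.comp_app, Category.assoc]
      rfl
    erw [← key, Category.assoc, Category.assoc, Category.assoc]
    congr 2
    erw [Category.assoc, eqToHom_trans_assoc, eqToHom_refl, Category.id_comp]
    rfl
  -- the cloak property
  intro X f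
  obtain ⟨g0, hg0, hg0u⟩ := h1 X.A (eqToHom (hobj X A).symm ≫ f.f ≫ G.ε.app Z)
  refine ⟨toCofree X g0, ?_, ?_⟩
  · apply Comonad.Coalgebra.Hom.ext
    have hfc : (toCofree X g0).f ≫ G.ε.app E1 = g0 := by
      rw [toCofree_f]
      erw [Category.assoc]
      have hn := G.ε.naturality g0
      simp only [Functor.id_map] at hn
      erw [hn, ← Category.assoc, X.counit, Category.id_comp]
    have hcomp : ((Tbar.map (toCofree X g0)).app A ≫ ev).f ≫ G.ε.app Z =
        f.f ≫ G.ε.app Z := by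
      rw [hkey X (toCofree X g0), hfc, hg0]
      simp [eqToHom_trans_assoc]
    rw [hom_to_cofree_eq ((Tbar.map (toCofree X g0)).app A ≫ ev), hom_to_cofree_eq f, hcomp]
  · intro g' hg'
    apply Comonad.Coalgebra.Hom.ext
    have h1' : g'.f ≫ G.ε.app E1 = g0 := by
      apply hg0u
      have hthis := hkey X g'
      rw [hg'] at hthis
      rw [hthis]
      simp [eqToHom_trans_assoc]
    rw [hom_to_cofree_eq g', h1', toCofree_f]

end WoodStmt4
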